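/- Let ξ > 1, d ≥ 1, and let w_1,...,w_d be positive reals. Let H be a finite nonnegative Borel measure on the unit simplex S₊ ⊂ ℝ^d with ∫ u_j dH(u) = 1 for each j. Then (Σ_{i=1}^d w_i)^{1/ξ} ≤ ∫ (w_1 u_1^ξ + ... + w_d u_d^ξ)^{1/ξ} dH(u) ≤ Σ_{i=1}^d w_i^{1/ξ}. -/

import Mathlib

open MeasureTheory

lemma real_rpow_add_le {x y p : ℝ} (hx : 0 ≤ x) (hy : 0 ≤ y) (hp0 : 0 ≤ p) (hp1 : p ≤ 1) :
    (x + y) ^ p ≤ x ^ p + y ^ p := by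
  have h := NNReal.coe_le_coe.2 (NNReal.rpow_add_le_add_rpow x.toNNReal y.toNNReal hp0 hp1)
  simpa [NNReal.coe_rpow, Real.coe_toNNReal x hx, Real.coe_toNNReal y hy,
    Real.toNNReal_add hx hy] using h

lemma real_rpow_sum_le {ι : Type*} (s : Finset ι) (a : ι → ℝ) {p : ℝ} (hp0 : 0 < p)
    (hp1 : p ≤ 1) (ha : ∀ i ∈ s, 0 ≤ a i) :
    (∑ i ∈ s, a i) ^ p ≤ ∑ i ∈ s, a i ^ p := by
  classical
  induction s using Finset.cons_induction with
  | empty => simp [Real.zero_rpow hp0.ne']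
  | cons j s hj ih =>
    rw [Finset.sum_cons, Finset.sum_cons]
    have h0 : 0 ≤ a j := ha j (Finset.mem_cons_self _ _)
    have hs : 0 ≤ ∑ i ∈ s, a i :=
      Finset.sum_nonneg fun i hi => ha i (Finset.mem_cons_of_mem hi)
    calc (a j + ∑ i ∈ s, a i) ^ p ≤ a j ^ p + (∑ i ∈ s, a i) ^ p :=
          real_rpow_add_le h0 hs hp0.le hp1
      _ ≤ a j ^ p + ∑ i ∈ s, a i ^ p :=
          add_le_add_right (ih fun i hi => ha i (Finset.mem_cons_of_mem hi)) _

/-- Reversed (anti-diversification) Fréchet bounds for ξ > 1: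
`(Σ w_i)^{1/ξ} ≤ ρ_w(H) ≤ Σ w_i^{1/ξ}`. -/
theorem frechet_bounds_rho_reversed (d : ℕ) (hd : 1 ≤ d) (ξ : ℝ) (hξ : 1 < ξ)
    (w : Fin d → ℝ) (hw : ∀ i, 0 < w i)
    (H : Measure (Fin d → ℝ)) [IsFiniteMeasure H]
    (hsupp : H {u | ¬ ((∀ j, 0 ≤ u j) ∧ ∑ j, u j = 1)} = 0)
    (hmarg : ∀ j, ∫ u, u j ∂H = 1) :
    (∑ i, w i) ^ (1 / ξ) ≤ ∫ u, (∑ i, w i * (u i) ^ ξ) ^ (1 / ξ) ∂H ∧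
    ∫ u, (∑ i, w i * (u i) ^ ξ) ^ (1 / ξ) ∂H ≤ ∑ i, (w i) ^ (1 / ξ) := by
  have hξ0 : (0:ℝ) < ξ := lt_trans one_pos hξ
  have hp0 : (0:ℝ) < 1 / ξ := by positivity
  have hp1 : (1:ℝ) / ξ ≤ 1 := by
    rw [div_le_one hξ0]; exact hξ.le
  set W : ℝ := ∑ i, w i with hW
  have hWpos : 0 < W := Finset.sum_pos (fun i _ => hw i) ⟨⟨0, hd⟩, Finset.mem_univ _⟩
  -- a.e. on the simplex
  have hae : ∀ᵐ u ∂H, (∀ j, 0 ≤ u j) ∧ ∑ j, u j = 1 := by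
    rw [ae_iff]; exact hsupp
  -- integrability of coordinates
  have hint : ∀ j, Integrable (fun u : Fin d → ℝ => u j) H := by
    intro j
    by_contra hc
    have := hmarg j
    rw [integral_undef hc] at this
    exact one_ne_zero this.symm
  set f : (Fin d → ℝ) → ℝ := fun u => (∑ i, w i * (u i) ^ ξ) ^ (1 / ξ) with hf
  set g : (Fin d → ℝ) → ℝ := fun u => ∑ i, (w i) ^ (1 / ξ) * u i with hg
  set h : (Fin d → ℝ) → ℝ := fun u => W ^ (1 / ξ) * ∑ i, (w i / W) * u i with hh
  have hgint : Integrable g H :=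
    integrable_finset_sum _ fun i _ => (hint i).const_mul _
  have hhint : Integrable h H :=
    (integrable_finset_sum _ fun i _ => (hint i).const_mul _).const_mul _
  -- pointwise bounds on the simplex
  have hub : ∀ u : Fin d → ℝ, (∀ j, 0 ≤ u j) → f u ≤ g u := by
    intro u hu
    have : (∑ i, w i * (u i) ^ ξ) ^ (1 / ξ) ≤ ∑ i, (w i * (u i) ^ ξ) ^ (1 / ξ) :=
      real_rpow_sum_le _ _ hp0 hp1 fun i _ =>
        mul_nonneg (hw i).le (Real.rpow_nonneg (hu i) _)
    refine this.trans_eq (Finset.sum_congr rfl fun i _ => ?_)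
    rw [Real.mul_rpow (hw i).le (Real.rpow_nonneg (hu i) _),
      ← Real.rpow_mul (hu i), mul_one_div, div_self hξ0.ne', Real.rpow_one]
  have hlb : ∀ u : Fin d → ℝ, (∀ j, 0 ≤ u j) → h u ≤ f u := by
    intro u hu
    have hwsum : ∑ i, w i / W = 1 := by
      rw [← Finset.sum_div, ← hW, div_self hWpos.ne']
    have key : (∑ i, (w i / W) * u i) ^ ξ ≤ ∑ i, (w i / W) * (u i) ^ ξ :=
      Real.rpow_arith_mean_le_arith_mean_rpow Finset.univ (fun i => w i / W) u
        (fun i _ => div_nonneg (hw i).le hWpos.le) hwsum (fun i _ => hu i) hξ.le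
    have hs0 : 0 ≤ ∑ i, (w i / W) * u i :=
      Finset.sum_nonneg fun i _ => mul_nonneg (div_nonneg (hw i).le hWpos.le) (hu i)
    have key2 : ∑ i, (w i / W) * u i ≤ (∑ i, (w i / W) * (u i) ^ ξ) ^ (1 / ξ) := by
      have := Real.rpow_le_rpow (Real.rpow_nonneg hs0 ξ) key (le_of_lt hp0)
      rwa [← Real.rpow_mul hs0, mul_one_div, div_self hξ0.ne', Real.rpow_one] at this
    have hs1 : 0 ≤ ∑ i, (w i / W) * (u i) ^ ξ :=
      Finset.sum_nonneg fun i _ =>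
        mul_nonneg (div_nonneg (hw i).le hWpos.le) (Real.rpow_nonneg (hu i) _)
    calc h u ≤ W ^ (1 / ξ) * (∑ i, (w i / W) * (u i) ^ ξ) ^ (1 / ξ) := by
          exact mul_le_mul_of_nonneg_left key2 (Real.rpow_nonneg hWpos.le _)
      _ = (W * ∑ i, (w i / W) * (u i) ^ ξ) ^ (1 / ξ) :=
          (Real.mul_rpow hWpos.le hs1).symm
      _ = f u := by
          rw [Finset.mul_sum]
          refine congrArg (fun x : ℝ => x ^ (1 / ξ)) ?_
          refine Finset.sum_congr rfl fun i _ => ?_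
          field_simp
  have hub_ae : ∀ᵐ u ∂H, f u ≤ g u := hae.mono fun u hu => hub u hu.1
  have hlb_ae : ∀ᵐ u ∂H, h u ≤ f u := hae.mono fun u hu => hlb u hu.1
  have hfnn : ∀ᵐ u ∂H, 0 ≤ f u :=
    hae.mono fun u hu => Real.rpow_nonneg
      (Finset.sum_nonneg fun i _ => mul_nonneg (hw i).le (Real.rpow_nonneg (hu.1 i) _)) _
  -- measurability of f
  have hfm : AEStronglyMeasurable f H := by
    apply Measurable.aestronglyMeasurable
    have hin : Measurable fun u : Fin d → ℝ => ∑ i, w i * (u i) ^ ξ :=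
      Finset.measurable_sum _ fun i _ =>
        (((Real.continuous_rpow_const hξ0.le).measurable.comp
          (measurable_pi_apply i)).const_mul _)
    exact (Real.continuous_rpow_const hp0.le).measurable.comp hin
  have hfint : Integrable f H := by
    refine hgint.mono' hfm ?_
    filter_upwards [hub_ae, hfnn] with u h1 h2
    rwa [Real.norm_eq_abs, abs_of_nonneg h2]
  -- integral computations
  have hgval : ∫ u, g u ∂H = ∑ i, (w i) ^ (1 / ξ) := by
    rw [hg, integral_finset_sum _ fun i _ => (hint i).const_mul _]
    simp [integral_const_mul, hmarg]
  have hhval : ∫ u, h u ∂H = W ^ (1 / ξ) := by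
    rw [hh, integral_const_mul, integral_finset_sum _ fun i _ => (hint i).const_mul _]
    simp only [integral_const_mul, hmarg, mul_one]
    rw [← Finset.sum_div, ← hW, div_self hWpos.ne', mul_one]
  constructor
  · rw [← hhval]
    exact integral_mono_ae hhint hfint hlb_ae
  · rw [← hgval]
    exact integral_mono_ae hfint hgint hub_ae
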